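/- Let G be a graph, C a longest cycle of G, and H a connected component of G − C. Then for any vertices x, y of H, the set of neighbors of x on C is disjoint from the set of immediate predecessors (with respect to a fixed orientation of C) of neighbors of y on C. -/

import Mathlib

open SimpleGraph

variable {V : Type*} [Fintype V] [DecidableEq V]

/-- `p 0, p 1, ..., p (n-1)` is a path of order `n` in `G`. -/
def IsPathOn (G : SimpleGraph V) (n : ℕ) (p : ℕ → V) : Prop :=
  (∀ i j, i < n → j < n → p i = p j → i = j) ∧
  (∀ i, i + 1 < n → G.Adj (p i) (p (i + 1)))

/-- An induced path of order `n` in `G`. -/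
def IsInducedPathOn (G : SimpleGraph V) (n : ℕ) (p : ℕ → V) : Prop :=
  IsPathOn G n p ∧ ∀ i j, i < n → j < n → G.Adj (p i) (p j) → (i + 1 = j ∨ j + 1 = i)

/-- `G` contains no induced path on 5 vertices. -/
def P5Free (G : SimpleGraph V) : Prop := ¬ ∃ p : ℕ → V, IsInducedPathOn G 5 p

/-- `G` contains no induced `K₄` minus an edge. -/
def K4mFree (G : SimpleGraph V) : Prop :=
  ¬ ∃ a b c d : V, a ≠ b ∧ a ≠ c ∧ a ≠ d ∧ b ≠ c ∧ b ≠ d ∧ c ≠ d ∧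
    G.Adj a b ∧ G.Adj a c ∧ G.Adj a d ∧ G.Adj b c ∧ G.Adj b d ∧ ¬ G.Adj c d

/-- `G` contains no induced `W*` (two triangles `abc`, `def` joined by the edge `cd`). -/
def WStarFree (G : SimpleGraph V) : Prop :=
  ¬ ∃ a b c d e f : V, List.Nodup [a, b, c, d, e, f] ∧
    G.Adj a b ∧ G.Adj b c ∧ G.Adj a c ∧ G.Adj d e ∧ G.Adj e f ∧ G.Adj d f ∧ G.Adj c d ∧
    ¬ G.Adj a d ∧ ¬ G.Adj a e ∧ ¬ G.Adj a f ∧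
    ¬ G.Adj b d ∧ ¬ G.Adj b e ∧ ¬ G.Adj b f ∧ ¬ G.Adj c e ∧ ¬ G.Adj c f

/-- `G` contains no induced paw (triangle `abc` with pendant edge `cd`). -/
def Z1Free (G : SimpleGraph V) : Prop :=
  ¬ ∃ a b c d : V, List.Nodup [a, b, c, d] ∧
    G.Adj a b ∧ G.Adj b c ∧ G.Adj a c ∧ G.Adj c d ∧ ¬ G.Adj a d ∧ ¬ G.Adj b d

/-- An (oriented) cycle of length `n` in `G`, as an injective map `ZMod n → V`
with consecutive vertices adjacent. -/
def IsCycleOn (G : SimpleGraph V) (n : ℕ) (c : ZMod n → V) : Prop :=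
  3 ≤ n ∧ Function.Injective c ∧ ∀ i, G.Adj (c i) (c (i + 1))

/-- A longest cycle of `G`. -/
def IsLongestCycle (G : SimpleGraph V) (n : ℕ) (c : ZMod n → V) : Prop :=
  IsCycleOn G n c ∧ ∀ (m : ℕ) (d : ZMod m → V), IsCycleOn G m d → m ≤ n

/-- A dominating cycle: every edge of `G` is incident with a vertex of the cycle. -/
def DominatingCycle (G : SimpleGraph V) (n : ℕ) (c : ZMod n → V) : Prop :=
  IsCycleOn G n c ∧ ∀ u v : V, G.Adj u v → u ∈ Set.range c ∨ v ∈ Set.range c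

/-- `H` is (the vertex set of) a connected component of `G - R`. -/
def IsCompOff (G : SimpleGraph V) (R : Set V) (H : Set V) : Prop :=
  H.Nonempty ∧ Disjoint H R ∧ (G.induce H).Connected ∧
  ∀ u v : V, u ∈ H → v ∉ H → v ∉ R → ¬ G.Adj u v

/-- `μ`: the maximum order of a component of `G - R`. -/
noncomputable def muC (G : SimpleGraph V) (R : Set V) : ℕ :=
  sSup {k | ∃ H : Set V, IsCompOff G R H ∧ H.ncard = k}

/-- `ω`: the number of components of `G - R` of maximum order. -/
noncomputable def omegaC (G : SimpleGraph V) (R : Set V) : ℕ :=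
  {H : Set V | IsCompOff G R H ∧ H.ncard = muC G R}.ncard

/-- `G` is 2-connected: at least 3 vertices, connected, and removing any
vertex leaves it connected. -/
def TwoConnected (G : SimpleGraph V) : Prop :=
  3 ≤ Fintype.card V ∧ G.Connected ∧
  ∀ v : V, (G.induce ({v}ᶜ : Set V)).Connected

/-- The set of indices of `ZMod n` encountered going from `s` to `t` in the
positive direction (including both `s` and `t`). -/
def seg (n : ℕ) (s t : ZMod n) : Set (ZMod n) :=
  {x | ∃ k : ℕ, x = s + (k : ZMod n) ∧ ∀ m : ℕ, m < k → s + (m : ZMod n) ≠ t}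

/-- `G` is complete multipartite: the vertices partition into classes of an
equivalence relation which are independent, with all edges between classes. -/
def CompleteMultipartite (G : SimpleGraph V) : Prop :=
  ∃ r : V → V → Prop, Equivalence r ∧ ∀ u v : V, u ≠ v → (G.Adj u v ↔ ¬ r u v)

/-- A `C`-path (for `R = V(C)`): a path of order at least 2 whose ends lie in
`R` and whose internal vertices avoid `R`. -/
def IsCPath (G : SimpleGraph V) (R : Set V) (m : ℕ) (p : ℕ → V) : Prop :=
  2 ≤ m ∧ IsPathOn G m p ∧ p 0 ∈ R ∧ p (m - 1) ∈ R ∧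
  ∀ i, 0 < i → i < m - 1 → p i ∉ R

theorem stmt_1 (G : SimpleGraph V) (n : ℕ) (c : ZMod n → V)
    (hc : IsLongestCycle G n c)
    (H : Set V) (hH : IsCompOff G (Set.range c) H)
    (x y : V) (hx : x ∈ H) (hy : y ∈ H) :
    ∀ i : ZMod n, G.Adj x (c i) → ¬ G.Adj y (c (i + 1)) := by
  intro i hxi hyi
  obtain ⟨⟨hn3, hcinj, hcadj⟩, hmax⟩ := hc
  obtain ⟨-, hdisj, hconn, -⟩ := hH
  haveI : NeZero n := ⟨by omega⟩
  obtain ⟨w0⟩ := hconn ⟨x, hx⟩ ⟨y, hy⟩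
  obtain ⟨w, hwp⟩ := w0.toPath
  set L : List ↥H := w.support with hL
  have hnodup : L.Nodup := hwp.support_nodup
  have hchain : List.Chain' (G.induce H).Adj L := w.isChain_adj_support
  set k := L.length with hk
  have hk1 : 1 ≤ k := by
    rw [hk, hL, w.length_support]
    omega
  set p : ℕ → V := fun j => (L.getD j ⟨x, hx⟩ : ↥H).val with hp
  have hpH : ∀ j, p j ∈ H := fun j => (L.getD j ⟨x, hx⟩).prop
  have hpget : ∀ j (hj : j < k), p j = (L[j]'hj).val := by
    intro j hj
    simp only [hp, L.getD_eq_getElem _ hj]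
  have hp0 : p 0 = x := by
    rw [hpget 0 (by omega), ← List.head_eq_getElem_zero (by simp [hL])]
    simp [hL]
  have hplast : p (k - 1) = y := by
    rw [hpget (k - 1) (by omega), ← List.getLast_eq_getElem (by simp [hL])]
    simp [hL]
  have hpinj : ∀ a b, a < k → b < k → p a = p b → a = b := by
    intro a b ha hb hab
    rw [hpget a ha, hpget b hb] at hab
    exact (hnodup.getElem_inj_iff).mp (Subtype.coe_injective hab)
  have hpadj : ∀ j, j + 1 < k → G.Adj (p j) (p (j + 1)) := by
    intro j hj
    rw [hpget j (by omega), hpget (j + 1) hj]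
    have := List.isChain_iff_getElem.mp hchain j (by omega)
    simpa using this
  -- build a longer cycle
  set m := n + k with hm
  haveI : NeZero m := ⟨by omega⟩
  set d : ZMod m → V := fun j =>
    if h : j.val < n then c (i + 1 + (j.val : ZMod n)) else p (j.val - n) with hd
  have hsucc : ∀ j : ZMod m, (j + 1).val = (j.val + 1) % m := by
    intro j
    haveI : Fact (1 < m) := ⟨by omega⟩
    rw [ZMod.val_add, ZMod.val_one]
  have hccInj : ∀ a b : ℕ, a < n → b < n →
      c (i + 1 + (a : ZMod n)) = c (i + 1 + (b : ZMod n)) → a = b := by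
    intro a b ha hb hab
    have := hcinj hab
    have h2 : (a : ZMod n) = (b : ZMod n) := by
      have := add_left_cancel this
      exact this
    have := congrArg ZMod.val h2
    rwa [ZMod.val_cast_of_lt ha, ZMod.val_cast_of_lt hb] at this
  have hcyc : IsCycleOn G m d := by
    refine ⟨by omega, ?_, ?_⟩
    · intro a b hab
      have hav := a.val_lt
      have hbv := b.val_lt
      simp only [hd] at hab
      by_cases ha : a.val < n <;> by_cases hb : b.val < n
      · rw [dif_pos ha, dif_pos hb] at hab
        exact ZMod.val_injective m (hccInj _ _ ha hb hab)
      · rw [dif_pos ha, dif_neg hb] at hab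
        exact absurd (hpH _) (Set.disjoint_right.mp hdisj ⟨_, hab⟩)
      · rw [dif_neg ha, dif_pos hb] at hab
        exact absurd (hpH _) (Set.disjoint_right.mp hdisj ⟨_, hab.symm⟩)
      · rw [dif_neg ha, dif_neg hb] at hab
        have : a.val - n = b.val - n := hpinj _ _ (by omega) (by omega) hab
        have : a.val = b.val := by omega
        exact ZMod.val_injective m this
    · intro j
      have hjv := j.val_lt
      have hs := hsucc j
      simp only [hd]
      rcases lt_trichotomy (j.val + 1) n with h1 | h1 | h1
      · -- both on the cycle part
        rw [dif_pos (by omega), hs, Nat.mod_eq_of_lt (by omega), dif_pos h1]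
        have hcast : ((j.val + 1 : ℕ) : ZMod n) = (j.val : ZMod n) + 1 := by
          push_cast; ring
        rw [hcast, ← add_assoc]
        exact hcadj _
      · -- from c i to x
        rw [dif_pos (by omega), hs, Nat.mod_eq_of_lt (by omega), h1,
          dif_neg (by omega), Nat.sub_self, hp0]
        have hji : i + 1 + ((j.val : ℕ) : ZMod n) = i := by
          have hcast : ((j.val : ℕ) : ZMod n) = -1 := by
            have h2 : ((n : ℕ) : ZMod n) = 0 := ZMod.natCast_self n
            have h3 : (j.val : ℕ) = n - 1 := by omega
            rw [h3, Nat.cast_sub (by omega : 1 ≤ n), h2, Nat.cast_one]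
            ring
          rw [hcast]; ring
        rw [hji]
        exact hxi.symm
      · -- tail part
        have hn_le : n ≤ j.val := by omega
        rw [dif_neg (by omega)]
        rcases Nat.lt_or_ge (j.val + 1) m with h2 | h2
        · -- within the path
          rw [hs, Nat.mod_eq_of_lt h2, dif_neg (by omega)]
          have : j.val + 1 - n = (j.val - n) + 1 := by omega
          rw [this]
          exact hpadj _ (by omega)
        · -- from y back to c (i+1)
          have h3 : j.val + 1 = m := by omega
          rw [hs, h3, Nat.mod_self, dif_pos (by omega)]
          have h4 : j.val - n = k - 1 := by omega
          rw [h4, hplast]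
          simpa using hyi
  have := hmax m d hcyc
  omega
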